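/- For any strict composition α and n ≥ 1 variables, Newton(F_α(x1,...,xn)) = Newton(M_α(x1,...,xn)) as subsets of R^n. -/

import Mathlib

open MvPolynomial Finset
open scoped Classical

/-- The Newton polytope of a multivariate polynomial. -/
noncomputable def Newton {n : ℕ} {R : Type*} [CommSemiring R]
    (f : MvPolynomial (Fin n) R) : Set (Fin n → ℝ) :=
  convexHull ℝ ((fun d : Fin n →₀ ℕ => fun i => (d i : ℝ)) '' ↑f.support)

/-- The monomial quasisymmetric polynomial `M_α` in `n` variables. -/
noncomputable def Mq {n k : ℕ} (α : Fin k → ℕ) : MvPolynomial (Fin n) ℝ :=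
  ∑ ι ∈ Finset.univ.filter (fun ι : Fin k → Fin n => StrictMono ι),
    monomial (Finsupp.equivFunOnFinite.symm
      (fun j => ∑ i ∈ Finset.univ.filter (fun i => ι i = j), α i)) 1

/-- `M` of a composition given as a list. -/
noncomputable def MqL (n : ℕ) (L : List ℕ) : MvPolynomial (Fin n) ℝ :=
  Mq (fun j : Fin L.length => L.get j)

/-- Gessel's fundamental quasisymmetric polynomial
`F_α = Σ_{β→α} M_β`, where `β` runs over the compositions refining `α`
(i.e. `α` is obtained from `β` by successively merging adjacent parts);
such `β` are exactly joins of compositions of the individual parts of `α`. -/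
noncomputable def Fq {n k : ℕ} (α : Fin k → ℕ) : MvPolynomial (Fin n) ℝ :=
  ∑ c : (t : Fin k) → Composition (α t),
    MqL n ((List.ofFn fun t => (c t).blocks).flatten)

/-! ### Auxiliary material -/

noncomputable def expF {n k : ℕ} (α : Fin k → ℕ) (ι : Fin k → Fin n) : Fin n →₀ ℕ :=
  Finsupp.equivFunOnFinite.symm (fun j => ∑ i ∈ Finset.univ.filter (fun i => ι i = j), α i)

lemma expF_apply {n k : ℕ} (α : Fin k → ℕ) (ι : Fin k → Fin n) (j : Fin n) :
    expF α ι j = ∑ i ∈ Finset.univ.filter (fun i => ι i = j), α i := rfl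

lemma Mq_eq {n k : ℕ} (α : Fin k → ℕ) :
    (Mq α : MvPolynomial (Fin n) ℝ) =
      ∑ ι ∈ Finset.univ.filter (fun ι : Fin k → Fin n => StrictMono ι),
        monomial (expF α ι) 1 := rfl

lemma coeff_Mq {n k : ℕ} (α : Fin k → ℕ) (d : Fin n →₀ ℕ) :
    coeff d (Mq α : MvPolynomial (Fin n) ℝ) =
      ∑ ι ∈ Finset.univ.filter (fun ι : Fin k → Fin n => StrictMono ι),
        (if expF α ι = d then (1:ℝ) else 0) := by
  rw [Mq_eq, coeff_sum]
  refine Finset.sum_congr rfl fun ι _ => ?_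
  rw [coeff_monomial]

lemma coeff_Mq_nonneg {n k : ℕ} (α : Fin k → ℕ) (d : Fin n →₀ ℕ) :
    0 ≤ coeff d (Mq α : MvPolynomial (Fin n) ℝ) := by
  rw [coeff_Mq]
  exact Finset.sum_nonneg fun ι _ => by positivity

lemma expF_mem_support {n k : ℕ} (α : Fin k → ℕ) {ι : Fin k → Fin n} (hι : StrictMono ι) :
    expF α ι ∈ (Mq α : MvPolynomial (Fin n) ℝ).support := by
  rw [mem_support_iff, coeff_Mq]
  have h1 : (1:ℝ) ≤ ∑ ι' ∈ Finset.univ.filter (fun ι' : Fin k → Fin n => StrictMono ι'),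
      (if expF α ι' = expF α ι then (1:ℝ) else 0) := by
    have := Finset.single_le_sum (f := fun ι' : Fin k → Fin n =>
        (if expF α ι' = expF α ι then (1:ℝ) else 0))
      (fun i _ => by positivity) (Finset.mem_filter.2 ⟨Finset.mem_univ _, hι⟩)
    simpa using this
  intro h0
  rw [h0] at h1
  norm_num at h1

lemma support_Mq_subset {n k : ℕ} (α : Fin k → ℕ) {d : Fin n →₀ ℕ}
    (hd : d ∈ (Mq α : MvPolynomial (Fin n) ℝ).support) :
    ∃ ι : Fin k → Fin n, StrictMono ι ∧ d = expF α ι := by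
  rw [mem_support_iff, coeff_Mq] at hd
  obtain ⟨ι, hι, hne⟩ := Finset.exists_ne_zero_of_sum_ne_zero hd
  refine ⟨ι, by simpa using hι, ?_⟩
  by_contra h
  exact hne (if_neg (fun he => h he.symm))

/-- The key convexity lemma: if `b t •` is a decomposition of each part `α t` and the
positions `J` are cross-monotone, the corresponding exponent vector lies in `Newton (Mq α)`. -/
lemma key {n k : ℕ} (α : Fin k → ℕ) (hpos : ∀ t, 0 < α t)
    (m : Fin k → ℕ) (b : (t : Fin k) → Fin (m t) → ℕ)
    (hb : ∀ t, ∑ s, b t s = α t)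
    (J : (t : Fin k) → Fin (m t) → Fin n)
    (hJ : ∀ t t' s s', t < t' → J t s < J t' s') :
    (fun j : Fin n => ∑ t, ∑ s ∈ Finset.univ.filter (fun s => J t s = j), (b t s : ℝ))
      ∈ Newton (Mq α : MvPolynomial (Fin n) ℝ) := by
  have hα : ∀ t, (α t : ℝ) ≠ 0 := fun t => by exact_mod_cast (hpos t).ne'
  set w : ((t : Fin k) → Fin (m t)) → ℝ := fun s => ∏ t, (b t (s t) : ℝ) / α t with hw
  set z : ((t : Fin k) → Fin (m t)) → (Fin n → ℝ) :=
    fun s => (fun j => ((expF α (fun t => J t (s t))) j : ℝ)) with hzdef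
  have hw0 : ∀ s, 0 ≤ w s := fun s => Finset.prod_nonneg fun t _ => by positivity
  have hsum1 : ∀ t, ∑ x : Fin (m t), (b t x : ℝ) / α t = 1 := by
    intro t
    rw [← Finset.sum_div, div_eq_one_iff_eq (hα t)]
    exact_mod_cast hb t
  have hsum : ∑ s : (t : Fin k) → Fin (m t), w s = 1 := by
    have hps := Finset.prod_univ_sum (fun t : Fin k => (Finset.univ : Finset (Fin (m t))))
      (fun t x => (b t x : ℝ) / α t)
    rw [← Fintype.piFinset_univ]
    simp only [hw]
    rw [← hps]
    simp [hsum1]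
  have hmem : ∀ s : (t : Fin k) → Fin (m t),
      z s ∈ ((fun d : Fin n →₀ ℕ => fun i => (d i : ℝ)) ''
        ↑(Mq α : MvPolynomial (Fin n) ℝ).support) := by
    intro s
    refine ⟨expF α (fun t => J t (s t)), ?_, rfl⟩
    exact expF_mem_support α (fun t t' htt => hJ t t' (s t) (s t') htt)
  have hcc := Finset.centerMass_mem_convexHull (R := ℝ) Finset.univ
    (fun s _ => hw0 s) (by rw [hsum]; norm_num) (fun s (_ : s ∈ Finset.univ) => hmem s)
  rw [Finset.centerMass_eq_of_sum_1 _ _ hsum] at hcc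
  have hmain : (fun j : Fin n =>
      ∑ t, ∑ s ∈ Finset.univ.filter (fun s => J t s = j), (b t s : ℝ))
      = ∑ s : (t : Fin k) → Fin (m t), w s • z s := by
    funext j
    rw [Finset.sum_apply]
    simp only [Pi.smul_apply]
    have hz : ∀ s : (t : Fin k) → Fin (m t), ((expF α (fun t => J t (s t)) j : ℕ) : ℝ)
        = ∑ t, (if J t (s t) = j then (α t : ℝ) else 0) := by
      intro s
      rw [expF_apply, Finset.sum_filter]
      push_cast
      rfl
    have step1 : ∑ s : (t : Fin k) → Fin (m t), w s • z s j
        = ∑ t, ∑ s : (t : Fin k) → Fin (m t), w s * (if J t (s t) = j then (α t : ℝ) else 0) := by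
      rw [Finset.sum_comm]
      refine Finset.sum_congr rfl fun s _ => ?_
      rw [smul_eq_mul]
      show w s * ((expF α (fun t => J t (s t)) j : ℕ) : ℝ) = _
      rw [hz, Finset.mul_sum]
    rw [step1]
    refine Finset.sum_congr rfl fun t _ => Eq.symm ?_
    set F : (t' : Fin k) → Fin (m t') → ℝ := fun t' x =>
      ((b t' x : ℝ) / α t') * (if t' = t then (if J t' x = j then (α t' : ℝ) else 0) else 1)
      with hF
    have h1 : ∀ s : (t : Fin k) → Fin (m t),
        w s * (if J t (s t) = j then (α t : ℝ) else 0) = ∏ t', F t' (s t') := by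
      intro s
      rw [hF]
      simp only []
      rw [Finset.prod_mul_distrib, Finset.prod_ite_eq']
      simp [hw]
    have h3 : ∀ t', ∑ x, F t' x
        = if t' = t then ∑ x ∈ Finset.univ.filter (fun x => J t x = j), (b t x : ℝ) else 1 := by
      intro t'
      by_cases h : t' = t
      · subst h
        simp only [if_pos rfl, Finset.sum_filter]
        refine Finset.sum_congr rfl fun x _ => ?_
        simp [hF, mul_ite, div_mul_cancel₀ _ (hα t')]
      · simp only [if_neg h, hF, mul_one]
        exact hsum1 t'
    calc ∑ s : (t : Fin k) → Fin (m t), w s * (if J t (s t) = j then (α t : ℝ) else 0)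
        = ∑ s ∈ Fintype.piFinset (fun t => Finset.univ), ∏ t', F t' (s t') := by
          rw [Fintype.piFinset_univ]
          exact Finset.sum_congr rfl fun s _ => h1 s
      _ = ∏ t', ∑ x, F t' x :=
          (Finset.prod_univ_sum (fun t' : Fin k => (Finset.univ : Finset (Fin (m t'))))
            (fun t' x => F t' x)).symm
      _ = ∑ x ∈ Finset.univ.filter (fun x => J t x = j), (b t x : ℝ) := by
          calc ∏ t', ∑ x, F t' x = ∏ t', (if t' = t then
                ∑ x ∈ Finset.univ.filter (fun x => J t x = j), (b t x : ℝ) else 1) :=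
              Finset.prod_congr rfl fun t' _ => h3 t'
            _ = _ := by rw [Finset.prod_ite_eq']; simp
  rw [Newton, hmain]
  exact hcc

/-- Index bridge between a flattened list of lists and its sigma indexing. -/
lemma bridge {k : ℕ} (B : Fin k → List ℕ) :
    ∃ e : (t : Fin k) → Fin (B t).length → Fin (List.ofFn B).flatten.length,
      (∀ t t' s s', t < t' → e t s < e t' s') ∧
      (∀ t s, (List.ofFn B).flatten.get (e t s) = (B t).get s) ∧
      (∀ f : Fin (List.ofFn B).flatten.length → ℝ, ∑ i, f i = ∑ t, ∑ s, f (e t s)) := by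
  induction k with
  | zero =>
    refine ⟨fun t => t.elim0, fun t => t.elim0, fun t => t.elim0, fun f => ?_⟩
    have h : (List.ofFn B).flatten.length = 0 := by simp
    haveI : IsEmpty (Fin (List.ofFn B).flatten.length) := by rw [h]; infer_instance
    simp [Finset.univ_eq_empty]
  | succ k IH =>
    obtain ⟨e', he1, he2, he3⟩ := IH (fun t => B t.succ)
    have hL : (List.ofFn B).flatten = B 0 ++ (List.ofFn fun t : Fin k => B t.succ).flatten := by
      rw [List.ofFn_succ, List.flatten_cons]
    have hlen : (List.ofFn B).flatten.length
        = (B 0).length + (List.ofFn fun t : Fin k => B t.succ).flatten.length := by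
      rw [hL, List.length_append]
    set e : (t : Fin (k+1)) → Fin (B t).length → Fin (List.ofFn B).flatten.length :=
      Fin.cases (motive := fun t => Fin (B t).length → Fin (List.ofFn B).flatten.length)
        (fun s => Fin.cast hlen.symm (Fin.castAdd _ s))
        (fun t s => Fin.cast hlen.symm (Fin.natAdd _ (e' t s))) with he
    have e0 : ∀ s, e 0 s = Fin.cast hlen.symm (Fin.castAdd _ s) := fun s => by
      rw [he]; simp
    have eS : ∀ t s, e t.succ s = Fin.cast hlen.symm (Fin.natAdd _ (e' t s)) := fun t s => by
      rw [he]; simp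
    refine ⟨e, ?_, ?_, ?_⟩
    · intro t t' s s' h
      rcases Fin.eq_zero_or_eq_succ t' with rfl | ⟨t'', rfl⟩
      · exact absurd h (Fin.not_lt_zero _)
      rcases Fin.eq_zero_or_eq_succ t with rfl | ⟨t₀, rfl⟩
      · rw [Fin.lt_def, e0, eS]
        simp only [Fin.coe_cast, Fin.coe_castAdd, Fin.coe_natAdd]
        have := s.isLt
        omega
      · rw [Fin.lt_def, eS, eS]
        simp only [Fin.coe_cast, Fin.coe_natAdd]
        have h2 : t₀ < t'' := by rwa [Fin.succ_lt_succ_iff] at h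
        have := he1 t₀ t'' s s' h2
        rw [Fin.lt_def] at this
        omega
    · intro t s
      rcases Fin.eq_zero_or_eq_succ t with rfl | ⟨t₀, rfl⟩
      · rw [e0, List.get_eq_getElem, List.get_eq_getElem, List.getElem_of_eq hL]
        have h1 : ((Fin.cast hlen.symm (Fin.castAdd _ s)) : ℕ) = (s : ℕ) := rfl
        simp only [h1]
        rw [List.getElem_append_left]
      · rw [eS, List.get_eq_getElem, List.get_eq_getElem, List.getElem_of_eq hL]
        have h1 : ((Fin.cast hlen.symm (Fin.natAdd (B 0).length (e' t₀ s))) : ℕ)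
            = (B 0).length + (e' t₀ s : ℕ) := rfl
        simp only [h1]
        rw [List.getElem_append_right (by omega)]
        have := he2 t₀ s
        rw [List.get_eq_getElem, List.get_eq_getElem] at this
        simpa using this
    · intro f
      have step0 : ∑ i, f i = ∑ i : Fin ((B 0).length
          + (List.ofFn fun t : Fin k => B t.succ).flatten.length), f (Fin.cast hlen.symm i) :=
        (Fintype.sum_equiv (finCongr hlen.symm) _ f (fun i => rfl)).symm
      have part1 : ∑ i : Fin (B 0).length,
          f (Fin.cast hlen.symm (Fin.castAdd _ i)) = ∑ s : Fin (B 0).length, f (e 0 s) :=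
        Finset.sum_congr rfl fun s _ => by rw [e0]
      have part2 : ∑ i : Fin (List.ofFn fun t : Fin k => B t.succ).flatten.length,
          f (Fin.cast hlen.symm (Fin.natAdd (B 0).length i))
          = ∑ t : Fin k, ∑ s : Fin (B t.succ).length, f (e t.succ s) :=
        (he3 fun i => f (Fin.cast hlen.symm (Fin.natAdd (B 0).length i))).trans
          (Finset.sum_congr rfl fun t _ => Finset.sum_congr rfl fun s _ => by rw [eS])
      rw [step0, Fin.sum_univ_add, Fin.sum_univ_succ, part1, part2]

lemma support_Fq {n k : ℕ} (α : Fin k → ℕ) :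
    (Fq α : MvPolynomial (Fin n) ℝ).support
      = Finset.univ.biUnion (fun c : (t : Fin k) → Composition (α t) =>
          (MqL n ((List.ofFn fun t => (c t).blocks).flatten)).support) := by
  ext d
  simp only [Finset.mem_biUnion, Finset.mem_univ, true_and, mem_support_iff]
  rw [Fq, coeff_sum]
  constructor
  · intro h
    obtain ⟨c, _, hc⟩ := Finset.exists_ne_zero_of_sum_ne_zero h
    exact ⟨c, hc⟩
  · rintro ⟨c, hc⟩ h0
    have := (Finset.sum_eq_zero_iff_of_nonneg
      (fun c _ => coeff_Mq_nonneg (fun j => ((List.ofFn fun t => ((c : (t : Fin k) →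
        Composition (α t)) t).blocks).flatten.get j)) d)).1 h0 c (Finset.mem_univ c)
    exact hc this

lemma flatten_ofFn_singleton {k : ℕ} (α : Fin k → ℕ) :
    (List.ofFn fun t => [α t]).flatten = List.ofFn α := by
  induction k with
  | zero => simp
  | succ k IH =>
    rw [List.ofFn_succ, List.flatten_cons, IH, List.ofFn_succ]
    rfl

lemma Mq_congr {n k k' : ℕ} (h : k' = k) (α : Fin k → ℕ) :
    (Mq (fun j : Fin k' => α (Fin.cast h j)) : MvPolynomial (Fin n) ℝ) = Mq α := by
  subst h
  rfl

lemma MqL_ofFn {n k : ℕ} (α : Fin k → ℕ) :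
    MqL n (List.ofFn α) = (Mq α : MvPolynomial (Fin n) ℝ) := by
  rw [MqL]
  rw [show (fun j : Fin (List.ofFn α).length => (List.ofFn α).get j)
      = fun j : Fin (List.ofFn α).length => α (Fin.cast (List.length_ofFn (f := α)) j) from
    funext fun j => by rw [List.get_ofFn]]
  exact Mq_congr (List.length_ofFn (f := α)) α

/-- Each summand's Newton points lie in `Newton (Mq α)`. -/
lemma pts_subset {n k : ℕ} (α : Fin k → ℕ) (hpos : ∀ t, 0 < α t)
    (c : (t : Fin k) → Composition (α t)) :
    (fun d : Fin n →₀ ℕ => fun i => (d i : ℝ)) ''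
      ↑(MqL n ((List.ofFn fun t => (c t).blocks).flatten)).support
      ⊆ Newton (Mq α : MvPolynomial (Fin n) ℝ) := by
  rintro x ⟨d, hd, rfl⟩
  set B : Fin k → List ℕ := fun t => (c t).blocks with hB
  set L : List ℕ := (List.ofFn B).flatten with hLdef
  obtain ⟨ι, hι, rfl⟩ := support_Mq_subset (fun j : Fin L.length => L.get j) hd
  obtain ⟨e, he1, he2, he3⟩ := bridge B
  have hb : ∀ t, ∑ s : Fin (B t).length, (B t).get s = α t := by
    intro t
    have h1 : ∑ s : Fin (B t).length, (B t).get s = (B t).sum :=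
      List.sum_ofFn.symm.trans (congrArg List.sum (List.ofFn_get (B t)))
    rw [h1, hB]
    exact (c t).blocks_sum
  have hkey := key α hpos (fun t => (B t).length) (fun t s => (B t).get s) hb
    (fun t s => ι (e t s)) (fun t t' s s' h => hι (he1 t t' s s' h))
  have himg : (fun i : Fin n => ((expF (fun j : Fin L.length => L.get j) ι) i : ℝ))
      = fun j : Fin n => ∑ t, ∑ s ∈ Finset.univ.filter
          (fun s => ι (e t s) = j), (((B t).get s : ℕ) : ℝ) := by
    funext j
    show (((expF (fun j : Fin L.length => L.get j) ι) j : ℕ) : ℝ) = _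
    rw [expF_apply]
    push_cast
    rw [Finset.sum_filter]
    rw [he3 (fun i => if ι i = j then (L.get i : ℝ) else 0)]
    refine Finset.sum_congr rfl fun t _ => ?_
    rw [Finset.sum_filter]
    refine Finset.sum_congr rfl fun s _ => ?_
    show (if ι (e t s) = j then (L.get (e t s) : ℝ) else 0) = _
    rw [he2]
  show (fun i : Fin n => ((expF (fun j : Fin L.length => L.get j) ι) i : ℝ))
      ∈ Newton (Mq α : MvPolynomial (Fin n) ℝ)
  rw [himg]
  exact hkey

/-- `Newton(F_α) = Newton(M_α)` for any strict composition `α`. -/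
theorem stmt16 {n k : ℕ} (α : Fin k → ℕ) (hpos : ∀ t, 0 < α t) :
    Newton (Fq α : MvPolynomial (Fin n) ℝ) = Newton (Mq α : MvPolynomial (Fin n) ℝ) := by
  have hN : Newton (Fq α : MvPolynomial (Fin n) ℝ)
      = convexHull ℝ (⋃ c : (t : Fin k) → Composition (α t),
          (fun d : Fin n →₀ ℕ => fun i => (d i : ℝ)) ''
            ↑(MqL n ((List.ofFn fun t => (c t).blocks).flatten)).support) := by
    rw [Newton, support_Fq]
    congr 1
    rw [Finset.coe_biUnion, Set.image_iUnion₂]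
    simp
  apply subset_antisymm
  · rw [hN]
    refine convexHull_min ?_ (convex_convexHull ℝ _)
    rintro x hx
    rw [Set.mem_iUnion] at hx
    obtain ⟨c, hc⟩ := hx
    exact pts_subset α hpos c hc
  · rw [Newton]
    refine convexHull_min ?_ ?_
    · rintro x ⟨d, hd, rfl⟩
      rw [hN]
      apply subset_convexHull
      rw [Set.mem_iUnion]
      refine ⟨fun t => Composition.single (α t) (hpos t), d, ?_, rfl⟩
      have hM : MqL n ((List.ofFn fun t =>
          (Composition.single (α t) (hpos t)).blocks).flatten) = Mq α := by
        have h1 : (List.ofFn fun t => (Composition.single (α t) (hpos t)).blocks)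
            = List.ofFn fun t => [α t] := by
          refine congrArg List.ofFn (funext fun t => ?_)
          rw [Composition.single_blocks]
        rw [h1, flatten_ofFn_singleton, MqL_ofFn]
      rw [hM]
      exact hd
    · rw [hN]
      exact convex_convexHull ℝ _
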